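/- arXiv:1509.02683 — 2 statements merged into one kernel-verified Lean document; each statement's English description precedes it below -/
import Mathlib

section
/- Let G be a constraint graph, let C_1 and C_2 be legal configurations of G, let D be the set of edges on which C_1 and C_2 differ, and let l ≥ 1. If there exists a reconfiguration sequence of length at most l from C_1 to C_2, then there exists such a sequence of length at most l in which every edge reversed at any step lies at distance at most l, in the line graph of G, from some edge of D. -/
/-!
STATEMENT 11: Let G be a constraint graph, let C_1 and C_2 be legal
configurations of G, let D be the set of edges on which C_1 and C_2 differ,
and let l ≥ 1. If there exists a reconfiguration sequence of length at most l
from C_1 to C_2, then there exists such a sequence of length at most l in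
which every edge reversed at any step lies at distance at most l, in the line
graph of G, from some edge of D.

"Lies at distance at most l from some edge of D" is formalized as the
existence of a walk in the line graph from some edge of D to the edge, of
length at most l.
-/

/-- A configuration of a constraint graph assigns to each edge one of its
two endpoints (its head). -/
def IsConf {V : Type} (G : SimpleGraph V) (C : Sym2 V → V) : Prop :=
  ∀ e ∈ G.edgeSet, C e ∈ e

/-- A configuration is legal if every vertex receives inflow (total weight of
edges whose head is that vertex) at least its minimum inflow. -/
def Legal {V : Type} [Fintype V] [DecidableEq V] (G : SimpleGraph V)
    [DecidableRel G.Adj] (w : Sym2 V → ℕ) (μ : V → ℕ) (C : Sym2 V → V) : Prop :=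
  ∀ v : V, μ v ≤ ∑ e ∈ G.edgeFinset, if C e = v then w e else 0

/-- Two configurations agree (as orientations of the edges of `G`). -/
def ConfEq {V : Type} (G : SimpleGraph V) (C C' : Sym2 V → V) : Prop :=
  ∀ e ∈ G.edgeSet, C e = C' e

/-- One reconfiguration step: exactly one edge changes its orientation. -/
def Step {V : Type} (G : SimpleGraph V) (C C' : Sym2 V → V) : Prop :=
  ∃ e ∈ G.edgeSet, C e ≠ C' e ∧ ∀ f ∈ G.edgeSet, f ≠ e → C f = C' f

/-- A reconfiguration sequence: every configuration is a legal configuration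
and each consecutive pair differs in the orientation of exactly one edge. -/
def IsReconfSeq {V : Type} [Fintype V] [DecidableEq V] (G : SimpleGraph V)
    [DecidableRel G.Adj] (w : Sym2 V → ℕ) (μ : V → ℕ) {m : ℕ}
    (Cs : Fin (m + 1) → Sym2 V → V) : Prop :=
  (∀ i, IsConf G (Cs i) ∧ Legal G w μ (Cs i)) ∧
    ∀ i : Fin m, Step G (Cs i.castSucc) (Cs i.succ)

/-- In the sequence, each edge is reversed at most once. -/
def AtMostOnce {V : Type} (G : SimpleGraph V) {m : ℕ}
    (Cs : Fin (m + 1) → Sym2 V → V) : Prop :=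
  ∀ e ∈ G.edgeSet, ∀ i j : Fin m,
    Cs i.castSucc e ≠ Cs i.succ e → Cs j.castSucc e ≠ Cs j.succ e → i = j

/-- The line graph of `G`, on the vertex set `Sym2 V`: two edges of `G` are
adjacent iff they are distinct and share an endpoint. -/
def LineG {V : Type} (G : SimpleGraph V) : SimpleGraph (Sym2 V) where
  Adj e f := e ≠ f ∧ e ∈ G.edgeSet ∧ f ∈ G.edgeSet ∧ ∃ v, v ∈ e ∧ v ∈ f
  symm := by
    constructor
    rintro e f ⟨h1, h2, h3, v, hv1, hv2⟩
    exact ⟨h1.symm, h3, h2, v, hv2, hv1⟩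
  loopless := by constructor; rintro e ⟨h1, -⟩; exact h1 rfl

private def auxH {V : Type} (G : SimpleGraph V) (R : Finset (Sym2 V)) :
    SimpleGraph (Sym2 V) where
  Adj e f := (LineG G).Adj e f ∧ e ∈ R ∧ f ∈ R
  symm := by
    constructor
    rintro e f ⟨h1, hr1, hr2⟩
    exact ⟨h1.symm, hr2, hr1⟩
  loopless := by constructor; rintro e ⟨h1, -⟩; exact (LineG G).loopless.irrefl e h1

private lemma auxH_support {V : Type} (G : SimpleGraph V) (R : Finset (Sym2 V))
    {d f : Sym2 V} (q : (auxH G R).Walk d f) (hd : d ∈ R) : ∀ x ∈ q.support, x ∈ R := by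
  induction q with
  | nil =>
    intro x hx
    rw [SimpleGraph.Walk.support_nil, List.mem_singleton] at hx
    subst hx; exact hd
  | cons h q ih =>
    intro x hx
    rw [SimpleGraph.Walk.support_cons] at hx
    rcases List.mem_cons.mp hx with rfl | hx
    · exact hd
    · exact ih h.2.2 x hx

private lemma auxWalk {V : Type} [DecidableEq V] (G : SimpleGraph V) (R : Finset (Sym2 V))
    {d f : Sym2 V} (h : (auxH G R).Reachable d f) (hd : d ∈ R) :
    ∃ pth : (LineG G).Walk d f, pth.length + 1 ≤ R.card := by
  obtain ⟨q⟩ := h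
  set P : (auxH G R).Walk d f := (q.toPath : (auxH G R).Walk d f) with hP
  have hnd : P.support.Nodup := q.toPath.2.support_nodup
  have hsub := auxH_support G R P hd
  have hlen : P.support.length ≤ R.card := by
    rw [← List.toFinset_card_of_nodup hnd]
    apply Finset.card_le_card
    intro x hx
    exact hsub x (List.mem_toFinset.mp hx)
  have hle : auxH G R ≤ LineG G := fun _ _ hadj => hadj.1
  refine ⟨SimpleGraph.Walk.mapLe hle P, ?_⟩
  have h1 : (SimpleGraph.Walk.mapLe hle P).length = P.length := by
    simp [SimpleGraph.Walk.mapLe]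
  rw [h1, ← SimpleGraph.Walk.length_support]
  exact hlen

theorem stmt11 {V : Type} [Fintype V] [DecidableEq V] (G : SimpleGraph V)
    [DecidableRel G.Adj] (w : Sym2 V → ℕ) (μ : V → ℕ)
    (C₁ C₂ : Sym2 V → V)
    (h₁ : IsConf G C₁ ∧ Legal G w μ C₁) (h₂ : IsConf G C₂ ∧ Legal G w μ C₂)
    (D : Finset (Sym2 V)) (hD : D = G.edgeFinset.filter fun e => C₁ e ≠ C₂ e)
    (l : ℕ) (hl : 1 ≤ l)
    (h : ∃ (m : ℕ) (Cs : Fin (m + 1) → Sym2 V → V), m ≤ l ∧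
        ConfEq G (Cs 0) C₁ ∧ ConfEq G (Cs (Fin.last m)) C₂ ∧
        IsReconfSeq G w μ Cs) :
    ∃ (m : ℕ) (Cs : Fin (m + 1) → Sym2 V → V), m ≤ l ∧
        ConfEq G (Cs 0) C₁ ∧ ConfEq G (Cs (Fin.last m)) C₂ ∧
        IsReconfSeq G w μ Cs ∧
        ∀ f ∈ G.edgeSet, (∃ i : Fin m, Cs i.castSucc f ≠ Cs i.succ f) →
          ∃ d ∈ D, ∃ p : (LineG G).Walk d f, p.length ≤ l := by
  classical
  obtain ⟨m, Cs, hm, h0, hlast, hCL, hStep⟩ := h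
  -- ℕ-indexed configurations
  obtain ⟨c, hc⟩ : ∃ c : ℕ → Sym2 V → V, ∀ (k : ℕ) (hk : k < m + 1), c k = Cs ⟨k, hk⟩ :=
    ⟨fun k => Cs ⟨min k m, Nat.lt_succ_of_le (Nat.min_le_right k m)⟩, by
      intro k hk
      congr 1
      simp [Nat.min_eq_left (Nat.le_of_lt_succ hk)]⟩
  have hconf : ∀ k : ℕ, k ≤ m → IsConf G (c k) ∧ Legal G w μ (c k) := by
    intro k hk
    rw [hc k (Nat.lt_succ_of_le hk)]
    exact hCL _
  have hC1 : ∀ e ∈ G.edgeSet, c 0 e = C₁ e := by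
    intro e he
    rw [hc 0 (Nat.succ_pos m)]
    have h00 : (⟨0, Nat.succ_pos m⟩ : Fin (m + 1)) = 0 := Fin.ext (by simp)
    rw [h00]
    exact h0 e he
  have hC2 : ∀ e ∈ G.edgeSet, c m e = C₂ e := by
    intro e he
    rw [hc m (Nat.lt_succ_self m)]
    exact hlast e he
  have hstep' : ∀ k, k < m → ∃ e ∈ G.edgeSet,
      c k e ≠ c (k + 1) e ∧ ∀ f ∈ G.edgeSet, f ≠ e → c k f = c (k + 1) f := by
    intro k hk
    have h1 := hStep ⟨k, hk⟩
    have e1 : Cs (Fin.castSucc ⟨k, hk⟩) = c k := (hc k (Nat.lt_succ_of_lt hk)).symm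
    have e2 : Cs (Fin.succ ⟨k, hk⟩) = c (k + 1) := (hc (k + 1) (Nat.succ_lt_succ hk)).symm
    rw [e1, e2] at h1
    exact h1
  -- the changed edge of each step
  obtain ⟨s, hs⟩ : ∃ s : ∀ k, k < m → Sym2 V, ∀ k (hk : k < m),
      s k hk ∈ G.edgeSet ∧ (c k (s k hk) ≠ c (k + 1) (s k hk) ∧
        ∀ f ∈ G.edgeSet, f ≠ s k hk → c k f = c (k + 1) f) :=
    ⟨fun k hk => (hstep' k hk).choose, fun k hk => (hstep' k hk).choose_spec⟩
  -- the set of reversed edges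
  obtain ⟨R, hRdef⟩ : ∃ R : Finset (Sym2 V),
      R = G.edgeFinset.filter (fun e => ∃ k : Fin m, c k.val e ≠ c (k.val + 1) e) := ⟨_, rfl⟩
  have hmemR : ∀ e, e ∈ R ↔ (e ∈ G.edgeSet ∧ ∃ k : Fin m, c k.val e ≠ c (k.val + 1) e) := by
    intro e
    rw [hRdef, Finset.mem_filter, SimpleGraph.mem_edgeFinset]
  have hRedge : ∀ e ∈ R, e ∈ G.edgeSet := fun e he => ((hmemR e).1 he).1
  have hsR : ∀ k (hk : k < m), s k hk ∈ R := fun k hk =>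
    (hmemR _).2 ⟨(hs k hk).1, ⟨⟨k, hk⟩, (hs k hk).2.1⟩⟩
  -- constancy on intervals avoiding the changed edge
  have Lconst : ∀ f, f ∈ G.edgeSet → ∀ a b, a ≤ b → b ≤ m →
      (∀ k (hk : k < m), a ≤ k → k < b → f ≠ s k hk) → c a f = c b f := by
    intro f hf a b hab
    induction b, hab using Nat.le_induction with
    | base => intro _ _; rfl
    | succ b hab ih =>
      intro hbm hfar
      have hbm' : b < m := Nat.lt_of_lt_of_le (Nat.lt_succ_self b) hbm
      have h1 : c a f = c b f :=
        ih (le_of_lt hbm') (fun k hk hak hkb => hfar k hk hak (Nat.lt_succ_of_lt hkb))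
      have h2 : c b f = c (b + 1) f :=
        (hs b hbm').2.2 f hf (hfar b hbm' hab (Nat.lt_succ_self b))
      rw [h1, h2]
  have hnotR : ∀ f, f ∈ G.edgeSet → f ∉ R → ∀ a, a ≤ m → c a f = c 0 f := by
    intro f hf hfR a ha
    symm
    apply Lconst f hf 0 a (Nat.zero_le a) ha
    intro k hk _ _ heq
    exact hfR (heq ▸ hsR k hk)
  have hcardR : R.card ≤ m := by
    rcases Nat.eq_zero_or_pos m with hm0 | hm0
    · subst hm0
      have hempty : ∀ e, e ∉ R := by
        intro e he
        obtain ⟨-, k, -⟩ := (hmemR e).1 he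
        exact k.elim0
      rw [Finset.eq_empty_of_forall_notMem hempty]
      simp
    · have hspec : ∀ (e : Sym2 V) (hex : ∃ k : Fin m, c k.val e ≠ c (k.val + 1) e),
          c (hex.choose).val e ≠ c ((hex.choose).val + 1) e := fun e hex => hex.choose_spec
      have hinj : Set.InjOn
          (fun e => if hex : ∃ k : Fin m, c k.val e ≠ c (k.val + 1) e then hex.choose
            else (⟨0, hm0⟩ : Fin m)) ↑R := by
        intro e he e' he' hee
        obtain ⟨heS, hek⟩ := (hmemR e).1 (Finset.mem_coe.mp he)
        obtain ⟨heS', hek'⟩ := (hmemR e').1 (Finset.mem_coe.mp he')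
        simp only [dif_pos hek, dif_pos hek'] at hee
        have hu : ∀ k (hk : k < m) (x : Sym2 V), x ∈ G.edgeSet →
            c k x ≠ c (k + 1) x → x = s k hk := by
          intro k hk x hx hne
          by_contra hne2
          exact hne ((hs k hk).2.2 x hx hne2)
        have h1 : e = s (hek.choose).val (hek.choose).isLt :=
          hu _ _ e heS (hspec e hek)
        have h2 : e' = s (hek'.choose).val (hek'.choose).isLt :=
          hu _ _ e' heS' (hspec e' hek')
        rw [h1, h2]
        congr 1
        exact congrArg Fin.val hee
      have hcard := Finset.card_le_card_of_injOn (t := (Finset.univ : Finset (Fin m)))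
        _ (fun a _ => Finset.mem_univ _) hinj
      calc R.card ≤ (Finset.univ : Finset (Fin m)).card := hcard
        _ = m := by simp
  -- good and bad edges
  obtain ⟨Good, hGood⟩ : ∃ GP : Sym2 V → Prop,
      ∀ e, GP e ↔ ∃ d ∈ D, (auxH G R).Reachable d e := ⟨_, fun _ => Iff.rfl⟩
  obtain ⟨Bad, hBad⟩ : ∃ BP : Sym2 V → Prop,
      ∀ e, BP e ↔ (e ∈ R ∧ ¬ Good e) := ⟨_, fun _ => Iff.rfl⟩
  have hDgood : ∀ d ∈ D, Good d := fun d hd =>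
    (hGood d).2 ⟨d, hd, SimpleGraph.Reachable.refl d⟩
  have hclose : ∀ e f, Bad e → f ∈ R → (LineG G).Adj e f → Bad f := by
    intro e f hbe hfR hadj
    obtain ⟨heR, heG⟩ := (hBad e).1 hbe
    refine (hBad f).2 ⟨hfR, ?_⟩
    intro hgf
    obtain ⟨d, hd, hreach⟩ := (hGood f).1 hgf
    refine heG ((hGood e).2 ⟨d, hd, hreach.trans ?_⟩)
    exact SimpleGraph.Adj.reachable (⟨hadj.symm, hfR, heR⟩ : (auxH G R).Adj f e)
  have hDR : ∀ d ∈ D, d ∈ R := by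
    intro d hd
    rw [hD] at hd
    obtain ⟨hdE, hdne⟩ := Finset.mem_filter.mp hd
    have hdS := SimpleGraph.mem_edgeFinset.mp hdE
    by_contra hdR
    have hcm := hnotR d hdS hdR m le_rfl
    have : C₁ d = C₂ d := by
      rw [← hC1 d hdS, ← hC2 d hdS]
      exact hcm.symm
    exact hdne this
  have hgoodwalk : ∀ f, Good f → ∃ d ∈ D, ∃ pth : (LineG G).Walk d f, pth.length ≤ l := by
    intro f hgf
    obtain ⟨d, hd, hreach⟩ := (hGood f).1 hgf
    obtain ⟨pth, hlen⟩ := auxWalk G R hreach (hDR d hd)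
    refine ⟨d, hd, pth, ?_⟩
    omega
  -- good steps
  obtain ⟨GS, hGSdef⟩ : ∃ GS : Finset (Fin m),
      GS = Finset.univ.filter (fun k => ¬ Bad (s k.val k.isLt)) := ⟨_, rfl⟩
  have hGSnotbad : ∀ k (hk : k < m), (⟨k, hk⟩ : Fin m) ∈ GS → ¬ Bad (s k hk) := by
    intro k hk hmem
    rw [hGSdef, Finset.mem_filter] at hmem
    exact hmem.2
  have hGSbad : ∀ k (hk : k < m), (⟨k, hk⟩ : Fin m) ∉ GS → Bad (s k hk) := by
    intro k hk hmem
    by_contra hb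
    exact hmem (by rw [hGSdef, Finset.mem_filter]; exact ⟨Finset.mem_univ _, hb⟩)
  obtain ⟨p, hp⟩ : ∃ p, GS.card = p := ⟨_, rfl⟩
  have hpl : p ≤ l := by
    have h1 : GS.card ≤ m := by
      rw [hGSdef]
      calc (Finset.univ.filter _).card ≤ (Finset.univ : Finset (Fin m)).card :=
            Finset.card_filter_le _ _
        _ = m := by simp
    omega
  -- enumeration of good steps
  obtain ⟨ιv, hιlt, hιmono, hιGS, hιsurj⟩ :
      ∃ ιv : Fin p → ℕ,
        (∀ t, ιv t < m) ∧
        (∀ a b : Fin p, a < b → ιv a < ιv b) ∧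
        (∀ t (ht : ιv t < m), (⟨ιv t, ht⟩ : Fin m) ∈ GS) ∧
        (∀ k (hk : k < m), (⟨k, hk⟩ : Fin m) ∈ GS → ∃ t, ιv t = k) := by
    refine ⟨fun t => ((GS.orderIsoOfFin hp t : Fin m) : ℕ),
      fun t => (GS.orderIsoOfFin hp t : Fin m).isLt, ?_, ?_, ?_⟩
    · intro a b hab
      have h2 := (GS.orderIsoOfFin hp).strictMono hab
      exact h2
    · intro t ht
      have h2 := ((GS.orderIsoOfFin hp) t).2
      have he : (⟨((GS.orderIsoOfFin hp t : Fin m) : ℕ), ht⟩ : Fin m)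
          = (GS.orderIsoOfFin hp t : Fin m) := Fin.ext rfl
      rw [he]
      exact h2
    · intro k hk hmem
      refine ⟨(GS.orderIsoOfFin hp).symm ⟨⟨k, hk⟩, hmem⟩, ?_⟩
      simp
  have hιmono' : ∀ a b : Fin p, a ≤ b → ιv a ≤ ιv b := by
    intro a b hab
    rcases eq_or_lt_of_le hab with rfl | hlt
    · exact le_rfl
    · exact (hιmono _ _ hlt).le
  -- boundary indices
  obtain ⟨g, hG0, hGsucc, hGcast, hGap, hTail, hGle⟩ :
      ∃ g : Fin (p + 1) → ℕ,
        g 0 = 0 ∧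
        (∀ t : Fin p, g t.succ = ιv t + 1) ∧
        (∀ t : Fin p, g t.castSucc ≤ ιv t) ∧
        (∀ t : Fin p, ∀ k (hk : k < m), g t.castSucc ≤ k → k < ιv t →
          (⟨k, hk⟩ : Fin m) ∉ GS) ∧
        (∀ k (hk : k < m), g (Fin.last p) ≤ k → (⟨k, hk⟩ : Fin m) ∉ GS) ∧
        (∀ t, g t ≤ m) := by
    refine ⟨fun t => if ht : t.val = 0 then 0
      else ιv ⟨t.val - 1, by have := t.isLt; omega⟩ + 1, ?_, ?_, ?_, ?_, ?_, ?_⟩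
    · simp
    · intro t
      dsimp only
      rw [dif_neg (show ¬((t.succ : Fin (p + 1)).val = 0) from Nat.succ_ne_zero t.val)]
      rfl
    · intro t
      dsimp only
      by_cases h0t : (t.castSucc : Fin (p + 1)).val = 0
      · rw [dif_pos h0t]
        exact Nat.zero_le _
      · rw [dif_neg h0t]
        have h0t' : t.val ≠ 0 := h0t
        refine Nat.succ_le_of_lt (hιmono _ _ ?_)
        rw [Fin.lt_def]
        show t.val - 1 < t.val
        omega
    · intro t k hk hgk hkι hmem
      dsimp only at hgk
      obtain ⟨r, hr⟩ := hιsurj k hk hmem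
      rcases lt_or_ge r t with hrt | htr
      · have hrtv : r.val < t.val := Fin.lt_def.mp hrt
        have h0t : ¬((t.castSucc : Fin (p + 1)).val = 0) := by
          show ¬(t.val = 0)
          omega
        rw [dif_neg h0t] at hgk
        have hpf : t.val - 1 < p := by have := t.isLt; omega
        have hgk' : ιv ⟨t.val - 1, hpf⟩ + 1 ≤ k := hgk
        have hle1 : ιv r ≤ ιv ⟨t.val - 1, hpf⟩ := by
          apply hιmono'
          rw [Fin.le_def]
          show r.val ≤ t.val - 1
          omega
        omega
      · have := hιmono' t r htr
        omega
    · intro k hk hgk hmem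
      dsimp only at hgk
      obtain ⟨r, hr⟩ := hιsurj k hk hmem
      by_cases hp0 : p = 0
      · exact absurd r.isLt (by omega)
      · have h0t : ¬((Fin.last p).val = 0) := hp0
        rw [dif_neg h0t] at hgk
        have hpf : p - 1 < p := Nat.pred_lt hp0
        have hgk' : ιv ⟨p - 1, hpf⟩ + 1 ≤ k := hgk
        have hle1 : ιv r ≤ ιv ⟨p - 1, hpf⟩ := by
          apply hιmono'
          rw [Fin.le_def]
          show r.val ≤ p - 1
          have := r.isLt
          omega
        omega
    · intro t
      dsimp only
      by_cases h0t : t.val = 0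
      · rw [dif_pos h0t]
        exact Nat.zero_le _
      · rw [dif_neg h0t]
        exact Nat.succ_le_of_lt (hιlt _)
  -- the new sequence
  refine ⟨p, fun t e => if Bad e then c 0 e else c (g t) e, hpl, ?_, ?_, ⟨?_, ?_⟩, ?_⟩
  · -- ConfEq with C₁
    intro e he
    dsimp only
    rw [hG0]
    by_cases hb : Bad e
    · rw [if_pos hb]; exact hC1 e he
    · rw [if_neg hb]; exact hC1 e he
  · -- ConfEq with C₂
    intro e he
    dsimp only
    by_cases hb : Bad e
    · rw [if_pos hb]
      have heD : e ∉ D := fun hd => (((hBad e).1 hb).2) (hDgood e hd)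
      have h12 : C₁ e = C₂ e := by
        by_contra hne
        exact heD (hD ▸ Finset.mem_filter.mpr ⟨SimpleGraph.mem_edgeFinset.mpr he, hne⟩)
      rw [hC1 e he, h12]
    · rw [if_neg hb]
      have hcc : c (g (Fin.last p)) e = c m e := by
        apply Lconst e he _ _ (hGle _) le_rfl
        intro k' hk' ha' _ heq
        have hbk := hGSbad k' hk' (hTail k' hk' ha')
        exact hb (by rw [heq]; exact hbk)
      rw [hcc]
      exact hC2 e he
  · -- IsConf and Legal
    intro t
    constructor
    · intro e he
      dsimp only
      by_cases hb : Bad e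
      · rw [if_pos hb]; exact (hconf 0 (Nat.zero_le m)).1 e he
      · rw [if_neg hb]; exact (hconf (g t) (hGle t)).1 e he
    · intro v
      by_cases hvb : ∃ e₀, Bad e₀ ∧ v ∈ e₀
      · obtain ⟨e₀, hb0, hv0⟩ := hvb
        have hkey : ∀ e ∈ G.edgeFinset,
            (if (if Bad e then c 0 e else c (g t) e) = v then w e else 0)
              = (if c 0 e = v then w e else 0) := by
          intro e he
          have heS := SimpleGraph.mem_edgeFinset.mp he
          by_cases hb : Bad e
          · rw [if_pos hb]
          · rw [if_neg hb]
            by_cases hv : v ∈ e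
            · have heR : e ∉ R := by
                intro heR2
                by_cases hee : e = e₀
                · exact hb (by rw [hee]; exact hb0)
                · have hadj : (LineG G).Adj e₀ e :=
                    ⟨fun hq => hee hq.symm, hRedge e₀ ((hBad e₀).1 hb0).1, heS, v, hv0, hv⟩
                  exact hb (hclose e₀ e hb0 heR2 hadj)
              rw [hnotR e heS heR (g t) (hGle t)]
            · have hq1 : c (g t) e ≠ v :=
                fun hq => hv (hq ▸ (hconf (g t) (hGle t)).1 e heS)
              have hq2 : c 0 e ≠ v :=
                fun hq => hv (hq ▸ (hconf 0 (Nat.zero_le m)).1 e heS)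
              rw [if_neg hq1, if_neg hq2]
        calc μ v ≤ ∑ e ∈ G.edgeFinset, if c 0 e = v then w e else 0 :=
              (hconf 0 (Nat.zero_le m)).2 v
          _ = _ := (Finset.sum_congr rfl hkey).symm
      · have hkey : ∀ e ∈ G.edgeFinset,
            (if (if Bad e then c 0 e else c (g t) e) = v then w e else 0)
              = (if c (g t) e = v then w e else 0) := by
          intro e he
          have heS := SimpleGraph.mem_edgeFinset.mp he
          by_cases hb : Bad e
          · have hv : v ∉ e := fun hv => hvb ⟨e, hb, hv⟩
            have hq1 : c 0 e ≠ v :=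
              fun hq => hv (hq ▸ (hconf 0 (Nat.zero_le m)).1 e heS)
            have hq2 : c (g t) e ≠ v :=
              fun hq => hv (hq ▸ (hconf (g t) (hGle t)).1 e heS)
            rw [if_pos hb, if_neg hq1, if_neg hq2]
          · rw [if_neg hb]
        calc μ v ≤ ∑ e ∈ G.edgeFinset, if c (g t) e = v then w e else 0 :=
              (hconf (g t) (hGle t)).2 v
          _ = _ := (Finset.sum_congr rfl hkey).symm
  · -- steps
    intro t
    have hk : ιv t < m := hιlt t
    have hnb : ¬ Bad (s (ιv t) hk) := hGSnotbad (ιv t) hk (hιGS t hk)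
    refine ⟨s (ιv t) hk, (hs _ hk).1, ?_, ?_⟩
    · dsimp only
      have hfreeze1 : c (g t.castSucc) (s (ιv t) hk) = c (ιv t) (s (ιv t) hk) := by
        apply Lconst _ (hs _ hk).1 _ _ (hGcast t) (le_of_lt hk)
        intro k' hk' hak' hk'b heq
        have hbk := hGSbad k' hk' (hGap t k' hk' hak' hk'b)
        exact hnb (by rw [heq]; exact hbk)
      have hfreeze2 : c (g t.succ) (s (ιv t) hk) = c (ιv t + 1) (s (ιv t) hk) := by
        rw [hGsucc t]
      rw [if_neg hnb, if_neg hnb, hfreeze1, hfreeze2]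
      exact (hs _ hk).2.1
    · intro f hf hfe
      dsimp only
      by_cases hbf : Bad f
      · rw [if_pos hbf, if_pos hbf]
      · rw [if_neg hbf, if_neg hbf]
        have hab : g t.castSucc ≤ g t.succ := by
          rw [hGsucc t]
          exact Nat.le_succ_of_le (hGcast t)
        apply Lconst f hf _ _ hab (hGle _)
        intro k' hk' ha' hb' heq
        rw [hGsucc t] at hb'
        by_cases hltk : k' < ιv t
        · have hbk := hGSbad k' hk' (hGap t k' hk' ha' hltk)
          exact absurd (by rw [heq]; exact hbk) hbf
        · have hk'' : k' = ιv t := by omega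
          subst hk''
          exact hfe heq
  · -- locality
    intro f hf hrev
    obtain ⟨t, hne⟩ := hrev
    dsimp only at hne
    by_cases hbf : Bad f
    · rw [if_pos hbf, if_pos hbf] at hne
      exact absurd rfl hne
    · rw [if_neg hbf, if_neg hbf] at hne
      have hfR : f ∈ R := by
        by_contra hfR
        exact hne (by rw [hnotR f hf hfR _ (hGle _), hnotR f hf hfR _ (hGle _)])
      have hgood : Good f := by
        by_contra hng
        exact hbf ((hBad f).2 ⟨hfR, hng⟩)
      exact hgoodwalk f hgood
end

section
/- Let G be a finite simple graph and let G' be its triangle replacement. For every set S ⊆ V(G): S is an odd cycle transversal of G' if and only if S is a vertex cover of G. -/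
/-!
STATEMENT 14: Let G be a finite simple graph and let G' be its triangle
replacement. For every set S ⊆ V(G): S is an odd cycle transversal of G' if
and only if S is a vertex cover of G.

The triangle replacement is built on the vertex type `V ⊕ {e // e ∈ G.edgeSet}`:
`Sum.inl u` is the original vertex `u` and `Sum.inr e` is the new vertex `x_e`
added for the edge `e`.
-/

/-- `S` is a vertex cover of `G`. -/
def IsVC {V : Type} (G : SimpleGraph V) (S : Set V) : Prop :=
  ∀ ⦃u v : V⦄, G.Adj u v → u ∈ S ∨ v ∈ S

/-- `S` is an odd cycle transversal of `H`: it meets every odd cycle of `H`. -/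
def IsOCT {W : Type} (H : SimpleGraph W) (S : Set W) : Prop :=
  ∀ (v : W) (c : H.Walk v v), c.IsCycle → Odd c.length → ∃ u ∈ c.support, u ∈ S

/-- The triangle replacement `G'` of `G`: for every edge `e = {u,v}` of `G`, a
new vertex `x_e` adjacent to `u` and to `v` is added (keeping all edges of
`G`). -/
def TriRep {V : Type} (G : SimpleGraph V) :
    SimpleGraph (V ⊕ {e : Sym2 V // e ∈ G.edgeSet}) where
  Adj a b :=
    match a, b with
    | .inl u, .inl v => G.Adj u v
    | .inl u, .inr e => u ∈ (e : Sym2 V)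
    | .inr e, .inl u => u ∈ (e : Sym2 V)
    | .inr _, .inr _ => False
  symm := by
    constructor
    rintro (u | e) (v | f) h
    · exact h.symm
    · exact h
    · exact h
    · exact h.elim
  loopless := by
    constructor
    rintro (u | e) h
    · exact G.irrefl h
    · exact h

def par {V : Type} {G : SimpleGraph V} : (V ⊕ {e : Sym2 V // e ∈ G.edgeSet}) → ℕ
  | .inl _ => 0
  | .inr _ => 1

lemma key {V : Type} (G : SimpleGraph V) :
    ∀ {a b : V ⊕ {e : Sym2 V // e ∈ G.edgeSet}} (w : (TriRep G).Walk a b),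
    (∃ u v, G.Adj u v ∧ Sum.inl u ∈ w.support ∧ Sum.inl v ∈ w.support) ∨
      Even (w.length + par a + par b) := by
  intro a b w
  induction w with
  | nil => right; rcases ‹_ ⊕ _› with u | e <;> simp [par]
  | @cons a x b h w ih =>
    rcases ih with ⟨u, v, huv, hu, hv⟩ | hev
    · left
      exact ⟨u, v, huv, List.mem_cons_of_mem _ hu, List.mem_cons_of_mem _ hv⟩
    · rcases a with u | e <;> rcases x with v | f
      · left
        refine ⟨u, v, h, by simp, List.mem_cons_of_mem _ w.start_mem_support⟩
      · right
        simp only [SimpleGraph.Walk.length_cons, par] at *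
        have hb : @par V G b = 0 ∨ @par V G b = 1 := by
          rcases b with _ | _ <;> simp [par]
        rw [Nat.even_iff] at *
        omega
      · right
        simp only [SimpleGraph.Walk.length_cons, par] at *
        have hb : @par V G b = 0 ∨ @par V G b = 1 := by
          rcases b with _ | _ <;> simp [par]
        rw [Nat.even_iff] at *
        omega
      · exact absurd h (by simp [TriRep])

theorem stmt14 {V : Type} [Fintype V] [DecidableEq V] (G : SimpleGraph V)
    (S : Set V) :
    IsOCT (TriRep G) (Sum.inl '' S) ↔ IsVC G S := by
  constructor
  · intro hOCT u v huv
    set e : {e : Sym2 V // e ∈ G.edgeSet} := ⟨s(u, v), G.mem_edgeSet.mpr huv⟩ with he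
    have h1 : (TriRep G).Adj (Sum.inl u) (Sum.inl v) := huv
    have h2 : (TriRep G).Adj (Sum.inl v) (Sum.inr e) := by
      show v ∈ (e : Sym2 V); simp [he]
    have h3 : (TriRep G).Adj (Sum.inr e) (Sum.inl u) := by
      show u ∈ (e : Sym2 V); simp [he]
    let c : (TriRep G).Walk (Sum.inl u) (Sum.inl u) :=
      .cons h1 (.cons h2 (.cons h3 .nil))
    have hc : c.IsCycle := by
      refine ⟨⟨⟨?_⟩, by simp [c]⟩, ?_⟩
      · simp [c, huv.ne, huv.ne']
      · simp [c, huv.ne, huv.ne']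
    obtain ⟨w, hw, s, hs, rfl⟩ := hOCT _ c hc (by show Odd 3; decide)
    simp only [c, SimpleGraph.Walk.support_cons, SimpleGraph.Walk.support_nil,
      List.mem_cons, List.mem_singleton, List.not_mem_nil, or_false,
      Sum.inl.injEq, reduceCtorEq, false_or] at hw
    rcases hw with rfl | rfl | rfl
    · exact Or.inl hs
    · exact Or.inr hs
    · exact Or.inl hs
  · intro hVC w c hc hodd
    rcases key G c with ⟨u, v, huv, hu, hv⟩ | hev
    · rcases hVC huv with h | h
      · exact ⟨_, hu, u, h, rfl⟩
      · exact ⟨_, hv, v, h, rfl⟩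
    · exfalso
      have hw : @par V G w = 0 ∨ @par V G w = 1 := by
        rcases w with _ | _ <;> simp [par]
      rw [Nat.even_iff] at hev
      rw [Nat.odd_iff] at hodd
      omega
end
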